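/- Let U, V be unit vectors in ℝ^N with ⟨U,V⟩ = u, u² ≠ 1, and let ε₁, ε₂ > 0. Then the Gaussian measure (with density (2π)^{-N/2} e^{-|f|²/2}) of the set {f ∈ ℝ^N : |⟨f,U⟩| ≤ ε₁ and |⟨f,V⟩| ≤ ε₂}, weighted by |f|², satisfies ∫_{|⟨f,U⟩|≤ε₁, |⟨f,V⟩|≤ε₂} |f|² e^{-|f|²/2} df ≤ C_N · ε₁ε₂/√(1-u²) for a constant C_N depending only on N. -/

import Mathlib

open Real MeasureTheory

lemma aux_pt {t : ℝ} (ht : 0 ≤ t) :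
    t * Real.exp (-t / 2) ≤ (4 / Real.exp 1) * Real.exp (-t / 4) := by
  have h1 : Real.exp (-t / 2) = Real.exp (-t / 4) * Real.exp (-t / 4) := by
    rw [← Real.exp_add]; ring_nf
  have h2 : t * Real.exp (-t / 4) ≤ 4 / Real.exp 1 := by
    have h3 : Real.exp 1 * (t / 4) ≤ Real.exp (t / 4) := by
      have := Real.add_one_le_exp (t / 4 - 1)
      calc Real.exp 1 * (t / 4) = Real.exp 1 * ((t/4 - 1) + 1) := by ring
        _ ≤ Real.exp 1 * Real.exp (t/4 - 1) := by
            nlinarith [Real.exp_pos (1:ℝ)]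
        _ = Real.exp (t / 4) := by rw [← Real.exp_add]; ring_nf
    rw [le_div_iff₀ (Real.exp_pos 1)]
    have h4 : Real.exp (-t/4) * Real.exp (t/4) = 1 := by rw [← Real.exp_add]; ring_nf; exact Real.exp_zero
    nlinarith [Real.exp_pos (t/4), Real.exp_pos (1:ℝ), Real.exp_pos (-t/4)]
  calc t * Real.exp (-t/2) = (t * Real.exp (-t/4)) * Real.exp (-t/4) := by rw [h1]; ring
    _ ≤ (4 / Real.exp 1) * Real.exp (-t / 4) := by
        have := Real.exp_pos (-t/4); nlinarith

noncomputable def Kc (n : ℕ) : ENNReal :=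
  ∫⁻ c : Fin n → ℝ, ENNReal.ofReal (∏ i, Real.exp (-(c i)^2 / 4))

lemma Kc_ne_top (n : ℕ) : Kc n ≠ ⊤ := by
  have hint : Integrable (fun c : Fin n → ℝ => ∏ i : Fin n, Real.exp (-(c i)^2 / 4)) := by
    have h1 : Integrable (fun x : ℝ => Real.exp (-(x)^2 / 4)) := by
      have := integrable_exp_neg_mul_sq (b := (1/4 : ℝ)) (by norm_num)
      convert this using 2 with x
      ring_nf
    exact Integrable.fintype_prod (f := fun _ x => Real.exp (-(x)^2/4)) (fun _ => h1)
  have : Kc n ≤ ∫⁻ c : Fin n → ℝ, ‖∏ i : Fin n, Real.exp (-(c i)^2 / 4)‖ₑ := by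
    apply lintegral_mono
    intro c
    simp only
    rw [← Real.enorm_eq_ofReal (Finset.prod_nonneg (fun i _ => (Real.exp_pos _).le))]
  exact ne_top_of_le_ne_top hint.2.ne this

lemma core (n : ℕ) (u s ε₁ ε₂ : ℝ) (hs : 0 < s) (he1 : 0 < ε₁) (he2 : 0 < ε₂) :
    ∫⁻ y : Fin (n+2) → ℝ in {y | |y 0| ≤ ε₁ ∧ |u * y 0 + s * y 1| ≤ ε₂},
      ENNReal.ofReal ((∑ i, (y i)^2) * Real.exp (-(∑ i, (y i)^2)/2))
    ≤ ENNReal.ofReal (4/Real.exp 1) * ENNReal.ofReal (2*ε₂/s) * ENNReal.ofReal (2*ε₁) * Kc n := by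
  classical
  set P : Set (ℝ × ℝ) := {q | |q.1| ≤ ε₁ ∧ |u * q.1 + s * q.2| ≤ ε₂} with hP_def
  have hP : MeasurableSet P := by
    have : IsClosed P := by
      apply IsClosed.inter
      · exact isClosed_le (continuous_fst.abs) continuous_const
      · exact isClosed_le (((continuous_const.mul continuous_fst).add
          (continuous_const.mul continuous_snd)).abs) continuous_const
    exact this.measurableSet
  set A : ℝ × ℝ → ENNReal :=
    fun p => Set.indicator P (fun _ => ENNReal.ofReal (4 / Real.exp 1)) p with hA_def
  have hA : Measurable A := Measurable.indicator measurable_const hP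
  set Gc : (Fin n → ℝ) → ENNReal :=
    fun c => ENNReal.ofReal (∏ i, Real.exp (-(c i)^2 / 4)) with hGc_def
  have hGc : Measurable Gc := by
    apply ENNReal.measurable_ofReal.comp
    apply Finset.measurable_prod
    intro i _
    fun_prop
  set S : Set (Fin (n+2) → ℝ) := {y | |y 0| ≤ ε₁ ∧ |u * y 0 + s * y 1| ≤ ε₂} with hS_def
  have hS : MeasurableSet S := by
    have : IsClosed S := by
      apply IsClosed.inter
      · exact isClosed_le ((continuous_apply (0 : Fin (n+2))).abs) continuous_const
      · exact isClosed_le (((continuous_const.mul (continuous_apply (0 : Fin (n+2)))).add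
          (continuous_const.mul (continuous_apply (1 : Fin (n+2))))).abs) continuous_const
    exact this.measurableSet
  -- pointwise bound
  have hpt : ∀ y : Fin (n+2) → ℝ,
      S.indicator (fun y => ENNReal.ofReal ((∑ i, (y i)^2) * Real.exp (-(∑ i, (y i)^2)/2))) y
      ≤ A (y 0, y 1) * Gc (fun i => y i.succ.succ) := by
    intro y
    by_cases hy : y ∈ S
    · rw [Set.indicator_of_mem hy]
      have hyP : (y 0, y 1) ∈ P := hy
      rw [hA_def]
      simp only
      rw [Set.indicator_of_mem hyP, hGc_def]
      simp only
      rw [← ENNReal.ofReal_mul (by positivity)]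
      apply ENNReal.ofReal_le_ofReal
      set t : ℝ := ∑ i, (y i)^2 with ht_def
      set t' : ℝ := ∑ i : Fin n, (y i.succ.succ)^2 with ht'_def
      have htt' : t' ≤ t := by
        rw [ht_def, Fin.sum_univ_succ, Fin.sum_univ_succ]
        have h0 : (0:ℝ) ≤ (y 0)^2 := sq_nonneg _
        nlinarith [sq_nonneg (y (Fin.succ (0 : Fin (n+1))))]
      have hprod : ∏ i : Fin n, Real.exp (-(y i.succ.succ)^2 / 4) = Real.exp (-t' / 4) := by
        rw [← Real.exp_sum]
        congr 1
        rw [ht'_def, ← Finset.sum_div, ← Finset.sum_neg_distrib]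
      rw [hprod]
      calc t * Real.exp (-t/2) ≤ (4 / Real.exp 1) * Real.exp (-t/4) :=
            aux_pt (Finset.sum_nonneg fun i _ => sq_nonneg _)
        _ ≤ (4 / Real.exp 1) * Real.exp (-t'/4) := by
            apply mul_le_mul_of_nonneg_left _ (by positivity)
            apply Real.exp_le_exp.2
            linarith
    · rw [Set.indicator_of_notMem hy]
      exact zero_le
  -- the two coordinate splits
  set e1 := MeasurableEquiv.piFinSuccAbove (fun _ : Fin (n+2) => ℝ) 0 with he1_def
  set e2 := MeasurableEquiv.piFinSuccAbove (fun _ : Fin (n+1) => ℝ) 0 with he2_def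
  set Φ : ℝ × (Fin (n+1) → ℝ) → ENNReal :=
    fun z => A (z.1, z.2 0) * Gc (fun i => z.2 i.succ) with hΦ_def
  have hΦm : Measurable Φ := by
    apply Measurable.mul
    · exact hA.comp (measurable_fst.prodMk ((measurable_pi_apply 0).comp measurable_snd))
    · exact hGc.comp (measurable_pi_lambda _ fun i => (measurable_pi_apply i.succ).comp measurable_snd)
  have hcomp1 : ∀ y : Fin (n+2) → ℝ, A (y 0, y 1) * Gc (fun i => y i.succ.succ) = Φ (e1 y) := by
    intro y
    rw [hΦ_def, he1_def]
    simp [MeasurableEquiv.piFinSuccAbove_apply, Fin.removeNth, Fin.tail, Fin.succAbove_zero,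
      Fin.succ_zero_eq_one]
  calc ∫⁻ y in S, ENNReal.ofReal ((∑ i, (y i)^2) * Real.exp (-(∑ i, (y i)^2)/2))
      = ∫⁻ y, S.indicator (fun y => ENNReal.ofReal ((∑ i, (y i)^2) * Real.exp (-(∑ i, (y i)^2)/2))) y := by
        rw [lintegral_indicator hS]
    _ ≤ ∫⁻ y, A (y 0, y 1) * Gc (fun i => y i.succ.succ) := lintegral_mono hpt
    _ = ∫⁻ y, Φ (e1 y) := by simp only [hcomp1]
    _ = ∫⁻ z, Φ z := (volume_preserving_piFinSuccAbove (fun _ : Fin (n+2) => ℝ) 0).lintegral_comp_emb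
          (MeasurableEquiv.measurableEmbedding e1) Φ
    _ = ∫⁻ a, ∫⁻ w, Φ (a, w) := by
        rw [Measure.volume_eq_prod, lintegral_prod _ hΦm.aemeasurable]
    _ ≤ ENNReal.ofReal (4/Real.exp 1) * ENNReal.ofReal (2*ε₂/s) * ENNReal.ofReal (2*ε₁) * Kc n := by
        have inner_eq : ∀ a : ℝ, (∫⁻ w : Fin (n+1) → ℝ, Φ (a, w)) = (∫⁻ b : ℝ, A (a, b)) * Kc n := by
          intro a
          have hcomp2 : ∀ w : Fin (n+1) → ℝ,
              Φ (a, w) = (fun z : ℝ × (Fin n → ℝ) => A (a, z.1) * Gc z.2) (e2 w) := by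
            intro w
            rw [hΦ_def, he2_def]
            simp only [MeasurableEquiv.piFinSuccAbove_apply, Fin.removeNth, Fin.tail,
              Fin.succAbove_zero]
            rfl
          calc ∫⁻ w, Φ (a, w) = ∫⁻ z : ℝ × (Fin n → ℝ), A (a, z.1) * Gc z.2 := by
                simp only [hcomp2]
                exact (volume_preserving_piFinSuccAbove (fun _ : Fin (n+1) => ℝ) 0).lintegral_comp_emb
                  (MeasurableEquiv.measurableEmbedding e2)
                  (fun z : ℝ × (Fin n → ℝ) => A (a, z.1) * Gc z.2)
            _ = ∫⁻ b, ∫⁻ c, A (a, b) * Gc c := by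
                rw [Measure.volume_eq_prod, lintegral_prod]
                exact ((hA.comp (measurable_const.prodMk measurable_fst)).mul
                  (hGc.comp measurable_snd)).aemeasurable
            _ = ∫⁻ b, A (a, b) * Kc n := by
                apply lintegral_congr
                intro b
                rw [lintegral_const_mul _ hGc]
                rfl
            _ = (∫⁻ b, A (a, b)) * Kc n :=
                lintegral_mul_const _ (hA.comp measurable_prodMk_left)
        have hIA : ∀ a : ℝ, (∫⁻ b, A (a, b)) = Set.indicator (Set.Icc (-ε₁) ε₁)
            (fun _ => ENNReal.ofReal (4/Real.exp 1) * ENNReal.ofReal (2*ε₂/s)) a := by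
          intro a
          by_cases ha : |a| ≤ ε₁
          · have haI : a ∈ Set.Icc (-ε₁) ε₁ := by
              rw [Set.mem_Icc, ← abs_le]; exact ha
            rw [Set.indicator_of_mem haI]
            have hAb : ∀ b : ℝ, A (a, b) = Set.indicator
                (Set.Icc ((-ε₂ - u*a)/s) ((ε₂ - u*a)/s))
                (fun _ => ENNReal.ofReal (4/Real.exp 1)) b := by
              intro b
              have hmem : ((a, b) ∈ P) ↔ b ∈ Set.Icc ((-ε₂ - u*a)/s) ((ε₂ - u*a)/s) := by
                rw [hP_def]
                simp only [Set.mem_setOf_eq, Set.mem_Icc]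
                constructor
                · rintro ⟨-, h2⟩
                  rw [abs_le] at h2
                  constructor
                  · rw [div_le_iff₀ hs]; nlinarith [h2.1]
                  · rw [le_div_iff₀ hs]; nlinarith [h2.2]
                · rintro ⟨h1, h2⟩
                  refine ⟨ha, ?_⟩
                  rw [div_le_iff₀ hs] at h1
                  rw [le_div_iff₀ hs] at h2
                  rw [abs_le]
                  constructor <;> nlinarith
              rw [hA_def]
              simp only
              by_cases hb : (a, b) ∈ P
              · rw [Set.indicator_of_mem hb, Set.indicator_of_mem (hmem.1 hb)]
              · rw [Set.indicator_of_notMem hb,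
                  Set.indicator_of_notMem (fun h => hb (hmem.2 h))]
            calc ∫⁻ b, A (a, b)
                = ∫⁻ b, Set.indicator (Set.Icc ((-ε₂ - u*a)/s) ((ε₂ - u*a)/s))
                    (fun _ => ENNReal.ofReal (4/Real.exp 1)) b := lintegral_congr hAb
              _ = ENNReal.ofReal (4/Real.exp 1)
                    * volume (Set.Icc ((-ε₂ - u*a)/s) ((ε₂ - u*a)/s)) := by
                  rw [lintegral_indicator measurableSet_Icc, setLIntegral_const]
              _ = ENNReal.ofReal (4/Real.exp 1) * ENNReal.ofReal (2*ε₂/s) := by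
                  rw [Real.volume_Icc,
                    show (ε₂ - u*a)/s - (-ε₂ - u*a)/s = 2*ε₂/s by field_simp; ring]
          · rw [Set.indicator_of_notMem (by
              rw [Set.mem_Icc, ← abs_le]; exact ha)]
            have hz : ∀ b : ℝ, A (a, b) = 0 := by
              intro b
              rw [hA_def]
              simp only
              exact Set.indicator_of_notMem (fun h => ha h.1) _
            simp [hz]
        calc ∫⁻ a, ∫⁻ w, Φ (a, w) = ∫⁻ a, (∫⁻ b, A (a, b)) * Kc n := by
              simp only [inner_eq]
          _ = ∫⁻ a, Set.indicator (Set.Icc (-ε₁) ε₁)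
                (fun _ => ENNReal.ofReal (4/Real.exp 1) * ENNReal.ofReal (2*ε₂/s)) a * Kc n := by
              simp only [hIA]
          _ = (∫⁻ a, Set.indicator (Set.Icc (-ε₁) ε₁)
                (fun _ => ENNReal.ofReal (4/Real.exp 1) * ENNReal.ofReal (2*ε₂/s)) a) * Kc n :=
              lintegral_mul_const _ (measurable_const.indicator measurableSet_Icc)
          _ = (ENNReal.ofReal (4/Real.exp 1) * ENNReal.ofReal (2*ε₂/s)
                * volume (Set.Icc (-ε₁) ε₁)) * Kc n := by
              rw [lintegral_indicator measurableSet_Icc, setLIntegral_const]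
          _ ≤ ENNReal.ofReal (4/Real.exp 1) * ENNReal.ofReal (2*ε₂/s)
                * ENNReal.ofReal (2*ε₁) * Kc n := by
              rw [Real.volume_Icc, show ε₁ - (-ε₁) = 2*ε₁ by ring]


set_option maxHeartbeats 2000000 in
/-- For unit vectors `U, V ∈ ℝ^N` with `⟨U,V⟩ = u`, `u² ≠ 1`, the weighted Gaussian
mass of the slab intersection satisfies
`∫_{|⟨f,U⟩|≤ε₁, |⟨f,V⟩|≤ε₂} |f|² e^{-|f|²/2} df ≤ C_N ε₁ε₂/√(1-u²)`,
with `C_N` depending only on `N`. -/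
theorem stmt19 (N : ℕ) (hN : 1 ≤ N) :
    ∃ C : ℝ, 0 < C ∧
      ∀ (U V : EuclideanSpace ℝ (Fin N)), ‖U‖ = 1 → ‖V‖ = 1 →
      ∀ u : ℝ, u = inner ℝ U V → u^2 ≠ 1 →
      ∀ ε₁ ε₂ : ℝ, 0 < ε₁ → 0 < ε₂ →
        (∫ f in {f : EuclideanSpace ℝ (Fin N) |
            |(inner ℝ f U : ℝ)| ≤ ε₁ ∧ |(inner ℝ f V : ℝ)| ≤ ε₂},
          ‖f‖^2 * Real.exp (-‖f‖^2 / 2))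
          ≤ C * ε₁ * ε₂ / Real.sqrt (1 - u^2) := by
  rcases N with _ | _ | n
  · exact absurd hN (by norm_num)
  · -- N = 1 : vacuous
    refine ⟨1, one_pos, ?_⟩
    intro U V hU hV u hu hu1 ε₁ ε₂ hε₁ hε₂
    exfalso
    apply hu1
    have key : ∀ W : EuclideanSpace ℝ (Fin 1), ‖W‖ = 1 → (W 0)^2 = 1 := by
      intro W hW
      have h := EuclideanSpace.norm_eq W
      rw [hW] at h
      have h2 : (1:ℝ)^2 = (Real.sqrt (∑ i, ‖W i‖^2))^2 := by rw [← h]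
      rw [Real.sq_sqrt (Finset.sum_nonneg (fun i _ => sq_nonneg _))] at h2
      simpa [Fin.sum_univ_one, sq_abs] using h2.symm
    have huv : u = U 0 * V 0 := by
      rw [hu]; simp [PiLp.inner_apply, Fin.sum_univ_one]; ring
    have := key U hU; have := key V hV
    rw [huv]; nlinarith
  · -- main case, N = n + 2
    refine ⟨(4 / Real.exp 1) * 4 * (Kc n).toReal + 1, by positivity, ?_⟩
    intro U V hU hV u hu hu1 ε₁ ε₂ hε₁ hε₂
    set s : ℝ := Real.sqrt (1 - u^2) with hs_def
    have hu2 : u^2 < 1 := by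
      have h := abs_real_inner_le_norm U V
      rw [hU, hV] at h
      have h1 : |u| ≤ 1 := by rw [hu]; simpa using h
      have : u^2 ≤ 1 := by nlinarith [abs_nonneg u, sq_abs u]
      exact lt_of_le_of_ne this hu1
    have hs_pos : 0 < s := Real.sqrt_pos.2 (by linarith)
    have hs2 : s^2 = 1 - u^2 := Real.sq_sqrt (by linarith)
    -- construct adapted orthonormal basis
    set W : EuclideanSpace ℝ (Fin (n+2)) := s⁻¹ • (V - u • U) with hW_def
    have hUU : (inner ℝ U U : ℝ) = 1 := by
      rw [real_inner_self_eq_norm_sq, hU]; norm_num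
    have hVV : (inner ℝ V V : ℝ) = 1 := by
      rw [real_inner_self_eq_norm_sq, hV]; norm_num
    have hUV : (inner ℝ U V : ℝ) = u := hu.symm
    have hUW : (inner ℝ U W : ℝ) = 0 := by
      rw [hW_def, real_inner_smul_right, inner_sub_right, real_inner_smul_right, hUV, hUU]
      ring
    have hVU : (inner ℝ V U : ℝ) = u := by rw [real_inner_comm]; exact hUV
    have hWW : (inner ℝ W W : ℝ) = 1 := by
      rw [hW_def, real_inner_smul_right, real_inner_smul_left, inner_sub_right, inner_sub_left,
        inner_sub_left, real_inner_smul_right, real_inner_smul_right, real_inner_smul_left,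
        real_inner_smul_left, hUU, hVV, hUV, hVU]
      have : s⁻¹ * s⁻¹ * (s * s) = 1 := by field_simp
      nlinarith [hs2, hs_pos, this]
    have hVWU : V = u • U + s • W := by
      rw [hW_def, smul_smul, mul_inv_cancel₀ hs_pos.ne', one_smul]
      abel
    classical
    set v : Fin (n+2) → EuclideanSpace ℝ (Fin (n+2)) := fun i => if i = 0 then U else W
      with hv_def
    have hvon : Orthonormal ℝ (Set.restrict ({0, 1} : Set (Fin (n+2))) v) := by
      rw [orthonormal_iff_ite]
      rintro ⟨i, hi⟩ ⟨j, hj⟩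
      simp only [Set.mem_insert_iff, Set.mem_singleton_iff] at hi hj
      have h01 : (0 : Fin (n+2)) ≠ 1 := Fin.ne_of_val_ne (by simp)
      have hv0 : v 0 = U := if_pos rfl
      have hv1 : v 1 = W := if_neg h01.symm
      rcases hi with rfl | rfl <;> rcases hj with rfl | rfl
      · show (inner ℝ (v 0) (v 0) : ℝ) = _
        rw [hv0, if_pos rfl]; exact hUU
      · show (inner ℝ (v 0) (v 1) : ℝ) = _
        rw [hv0, hv1, if_neg (by simp [Subtype.ext_iff, h01])]; exact hUW
      · show (inner ℝ (v 1) (v 0) : ℝ) = _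
        rw [hv0, hv1, if_neg (by simp [Subtype.ext_iff, h01.symm])]
        rw [real_inner_comm]; exact hUW
      · show (inner ℝ (v 1) (v 1) : ℝ) = _
        rw [hv1, if_pos rfl]; exact hWW
    obtain ⟨b, hb⟩ := hvon.exists_orthonormalBasis_extension_of_card_eq
      (by simp [finrank_euclideanSpace])
    have hb0 : b 0 = U := by simpa [hv_def] using hb 0 (by simp)
    have hb1 : b 1 = W := by
      have := hb 1 (by simp)
      simpa [hv_def, show (1 : Fin (n+2)) ≠ 0 from Fin.ne_of_val_ne (by simp)] using this
    -- the sets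
    set Sorig : Set (EuclideanSpace ℝ (Fin (n+2))) :=
      {f | |(inner ℝ f U : ℝ)| ≤ ε₁ ∧ |(inner ℝ f V : ℝ)| ≤ ε₂} with hSorig_def
    set S1 : Set (EuclideanSpace ℝ (Fin (n+2))) :=
      {x | |x 0| ≤ ε₁ ∧ |u * x 0 + s * x 1| ≤ ε₂} with hS1_def
    set S2 : Set (Fin (n+2) → ℝ) :=
      {y | |y 0| ≤ ε₁ ∧ |u * y 0 + s * y 1| ≤ ε₂} with hS2_def
    have hSorig : Sorig = ⇑b.repr ⁻¹' S1 := by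
      ext f
      have hx0 : b.repr f 0 = (inner ℝ f U : ℝ) := by
        rw [OrthonormalBasis.repr_apply_apply, hb0, real_inner_comm]
      have hx1 : b.repr f 1 = (inner ℝ f W : ℝ) := by
        rw [OrthonormalBasis.repr_apply_apply, hb1, real_inner_comm]
      have hfV : (inner ℝ f V : ℝ) = u * b.repr f 0 + s * b.repr f 1 := by
        rw [hx0, hx1, hVWU, inner_add_right, real_inner_smul_right, real_inner_smul_right]
      simp only [hSorig_def, hS1_def, Set.mem_preimage, Set.mem_setOf_eq, hx0, hfV]
    -- nonnegativity and measurability of the integrand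
    have hg_cont : Continuous (fun f : EuclideanSpace ℝ (Fin (n+2)) =>
        ‖f‖^2 * Real.exp (-‖f‖^2 / 2)) :=
      (continuous_norm.pow 2).mul
        (Real.continuous_exp.comp ((continuous_norm.pow 2).neg.div_const 2))
    rw [integral_eq_lintegral_of_nonneg_ae
      (Filter.Eventually.of_forall (fun f => by positivity))
      hg_cont.aestronglyMeasurable.restrict]
    -- transfer the lintegral to the pi space
    have h1 : ∫⁻ f in Sorig, ENNReal.ofReal (‖f‖^2 * Real.exp (-‖f‖^2 / 2))
        = ∫⁻ x in S1, ENNReal.ofReal (‖x‖^2 * Real.exp (-‖x‖^2 / 2)) := by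
      rw [hSorig]
      have hemb : MeasurableEmbedding (⇑b.repr) := b.measurableEquiv.measurableEmbedding
      have := b.measurePreserving_repr.setLIntegral_comp_preimage_emb hemb
        (fun x => ENNReal.ofReal (‖x‖^2 * Real.exp (-‖x‖^2 / 2))) S1
      rw [← this]
      apply lintegral_congr
      intro f
      simp [LinearIsometryEquiv.norm_map]
    have hnorm : ∀ x : EuclideanSpace ℝ (Fin (n+2)), ‖x‖^2 = ∑ i, (x i)^2 := by
      intro x
      rw [EuclideanSpace.norm_eq, Real.sq_sqrt (Finset.sum_nonneg (fun i _ => by positivity))]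
      simp [sq_abs]
    have h2 : ∫⁻ x in S1, ENNReal.ofReal (‖x‖^2 * Real.exp (-‖x‖^2 / 2))
        = ∫⁻ y in S2, ENNReal.ofReal ((∑ i, (y i)^2) * Real.exp (-(∑ i, (y i)^2) / 2)) := by
      have hemb : MeasurableEmbedding (⇑((MeasurableEquiv.toLp 2 (Fin (n+2) → ℝ)).symm)) :=
        ((MeasurableEquiv.toLp 2 (Fin (n+2) → ℝ)).symm).measurableEmbedding
      have hpre : S1 = ⇑((MeasurableEquiv.toLp 2 (Fin (n+2) → ℝ)).symm) ⁻¹' S2 := rfl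
      rw [hpre]
      have := (EuclideanSpace.volume_preserving_symm_measurableEquiv_toLp (Fin (n+2))).setLIntegral_comp_preimage_emb
        hemb (fun y => ENNReal.ofReal ((∑ i, (y i)^2) * Real.exp (-(∑ i, (y i)^2) / 2))) S2
      rw [← this]
      apply lintegral_congr
      intro x
      have : ∀ i, ((MeasurableEquiv.toLp 2 (Fin (n+2) → ℝ)).symm) x i = x i := fun i => rfl
      simp only [this, ← hnorm]
    rw [h1, h2]
    -- apply the core bound and conclude
    have hcore := core n u s ε₁ ε₂ hs_pos hε₁ hε₂
    have hKt : (Kc n) ≠ ⊤ := Kc_ne_top n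
    set Kt : ℝ := (Kc n).toReal with hKt_def
    have hKt0 : 0 ≤ Kt := ENNReal.toReal_nonneg
    apply ENNReal.toReal_le_of_le_ofReal (by positivity)
    refine le_trans hcore ?_
    have hKc_eq : Kc n = ENNReal.ofReal Kt := (ENNReal.ofReal_toReal hKt).symm
    rw [hKc_eq, ← ENNReal.ofReal_mul (by positivity), ← ENNReal.ofReal_mul (by positivity),
      ← ENNReal.ofReal_mul (by positivity)]
    apply ENNReal.ofReal_le_ofReal
    have heq : 4 / Real.exp 1 * (2*ε₂/s) * (2*ε₁) * Kt
        = ((4 / Real.exp 1) * 4 * Kt) * ε₁ * ε₂ / s := by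
      field_simp; ring
    rw [heq]
    have h' : (4 / Real.exp 1) * 4 * Kt * ε₁ * ε₂ ≤ ((4 / Real.exp 1) * 4 * Kt + 1) * ε₁ * ε₂ := by
      have hX : 0 ≤ (4 / Real.exp 1) * 4 * Kt := by positivity
      nlinarith
    exact div_le_div_of_nonneg_right h' hs_pos.le
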